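/- Every maximal solution s of the ODE s''(t) = √k·((s'(t))² − 1) with k > 0 and initial condition s'(t₀) > 1 has the form s(t) = -(1/√k)·log|C₁·e^{2√k t} − 1| + t + C₂ with C₁ > 0, and is defined only on an interval bounded above by (1/(2√k))·log(1/C₁), with s(t) → ∞ as t approaches this endpoint from below. -/

import Mathlib

set_option maxHeartbeats 1000000

open Real Set Filter

/-- Every maximal solution of `s'' = √k ((s')² - 1)` with `k > 0` and `s'(t₀) > 1`
has the form `s(t) = -(1/√k)·log|C₁ e^{2√k t} - 1| + t + C₂` with `C₁ > 0`; its
(order-connected, open) maximal domain `I` is bounded above by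
`(1/(2√k))·log(1/C₁)`, and `s(t) → ∞` as `t` approaches this endpoint from below. -/
theorem timelike_ode_blowup (k : ℝ) (hk : 0 < k) (s : ℝ → ℝ) (I : Set ℝ)
    (hIopen : IsOpen I) (hIconn : I.OrdConnected)
    (t₀ : ℝ) (ht₀ : t₀ ∈ I) (hs' : 1 < deriv s t₀)
    (hode : ∀ t ∈ I, deriv (deriv s) t = Real.sqrt k * ((deriv s t) ^ 2 - 1))
    (hmax : ∀ (J : Set ℝ) (u : ℝ → ℝ), IsOpen J → J.OrdConnected → I ⊆ J →
      (∀ t ∈ J, deriv (deriv u) t = Real.sqrt k * ((deriv u t) ^ 2 - 1)) →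
      Set.EqOn u s I → J = I) :
    ∃ C₁ C₂ : ℝ, 0 < C₁ ∧
      (∀ t ∈ I, s t = -(1 / Real.sqrt k) *
        Real.log |C₁ * Real.exp (2 * Real.sqrt k * t) - 1| + t + C₂) ∧
      I ⊆ Set.Iio (1 / (2 * Real.sqrt k) * Real.log (1 / C₁)) ∧
      Filter.Tendsto s
        (nhdsWithin (1 / (2 * Real.sqrt k) * Real.log (1 / C₁)) I) Filter.atTop := by
  set v := deriv s with hv
  set rk := Real.sqrt k with hrk
  have hrk0 : 0 < rk := Real.sqrt_pos.2 hk
  set V : Set ℝ := {t | t ∈ I ∧ 1 < v t} with hVdef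
  have ht₀V : t₀ ∈ V := ⟨ht₀, hs'⟩
  -- v solves the ODE with genuine derivative on V
  have hVd : ∀ t ∈ V, HasDerivAt v (rk * (v t ^ 2 - 1)) t := by
    intro t ht
    have h1 : deriv v t = rk * (v t ^ 2 - 1) := hode t ht.1
    have hvt : 1 < v t := ht.2
    have h2 : rk * (v t ^ 2 - 1) ≠ 0 := by
      have : 0 < rk * (v t ^ 2 - 1) := mul_pos hrk0 (by nlinarith)
      exact this.ne'
    have h3 : DifferentiableAt ℝ v t := by
      by_contra h
      rw [deriv_zero_of_not_differentiableAt h] at h1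
      exact h2 h1.symm
    have := h3.hasDerivAt
    rwa [h1] at this
  -- s is differentiable on V with derivative v
  have hVs : ∀ t ∈ V, HasDerivAt s (v t) t := by
    intro t ht
    have h3 : DifferentiableAt ℝ s t :=
      differentiableAt_of_deriv_ne_zero (by
        rw [← hv]
        have := ht.2; positivity)
    simpa [hv] using h3.hasDerivAt
  -- constants
  set lg : ℝ → ℝ := fun u => Real.log (v u - 1) - Real.log (v u + 1) with hlg
  set c' : ℝ := t₀ - 1 / (2 * rk) * lg t₀ with hc'
  clear_value c'
  set C₁ : ℝ := Real.exp (-(2 * rk * c')) with hC₁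
  have hC₁0 : 0 < C₁ := Real.exp_pos _
  set E : ℝ → ℝ := fun t => C₁ * Real.exp (2 * rk * t) with hE
  have hEeq : ∀ t, E t = Real.exp (2 * rk * (t - c')) := by
    intro t
    rw [hE]; simp only [hC₁]
    rw [← Real.exp_add]; ring_nf
  have hE0 : ∀ t, 0 < E t := fun t => by rw [hEeq]; exact Real.exp_pos _
  have hEd : ∀ t, HasDerivAt E (2 * rk * E t) t := by
    intro t
    have h1 : HasDerivAt (fun u : ℝ => 2 * rk * u) (2 * rk) t := by
      simpa using (hasDerivAt_id t).const_mul (2 * rk)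
    have h2 := (h1.exp).const_mul C₁
    exact h2.congr_deriv (by simp only [hE]; ring)
  have hElt : ∀ t, E t < 1 ↔ t < c' := by
    intro t
    rw [hEeq, Real.exp_lt_one_iff]
    constructor <;> intro h <;> nlinarith
  set F : ℝ → ℝ := fun t => -(1 / rk) * Real.log (1 - E t) + t with hF
  have hFd : ∀ u, E u < 1 → HasDerivAt F ((1 + E u) / (1 - E u)) u := by
    intro u hu
    have h1 : HasDerivAt (fun t => 1 - E t) (-(2 * rk * E u)) u := by
      have := (hasDerivAt_const u (1:ℝ)).sub (hEd u)
      simp only [zero_sub] at this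
      exact this
    have h2 : (1 : ℝ) - E u ≠ 0 := by linarith
    have h3 := ((h1.log h2).const_mul (-(1 / rk))).add (hasDerivAt_id u)
    refine h3.congr_deriv ?_
    field_simp
    ring
  set C₂ : ℝ := s t₀ - F t₀ with hC₂
  clear_value C₂
  -- the key segment lemma
  have hseg : ∀ t, Set.uIcc t₀ t ⊆ V →
      E t < 1 ∧ v t = (1 + E t) / (1 - E t) := by
    intro t htV
    -- G is constant on the segment
    have hG : ∀ u ∈ Set.uIcc t₀ t,
        HasDerivWithinAt (fun u => 1 / (2 * rk) * lg u - u) 0 (Set.uIcc t₀ t) u := by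
      intro u hu
      have huV := htV hu
      have hv1 : 1 < v u := huV.2
      have hd := hVd u huV
      have h1 : HasDerivAt (fun w => Real.log (v w - 1))
          ((rk * (v u ^ 2 - 1)) / (v u - 1)) u := by
        have := ((hd.sub_const 1).log (by linarith : v u - 1 ≠ 0))
        simpa using this
      have h2 : HasDerivAt (fun w => Real.log (v w + 1))
          ((rk * (v u ^ 2 - 1)) / (v u + 1)) u := by
        have := ((hd.add_const 1).log (by linarith : v u + 1 ≠ 0))
        simpa using this
      have h3 := (((h1.sub h2).const_mul (1 / (2 * rk))).sub (hasDerivAt_id u))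
      have h4 : 1 / (2 * rk) * ((rk * (v u ^ 2 - 1)) / (v u - 1)
          - (rk * (v u ^ 2 - 1)) / (v u + 1)) - 1 = 0 := by
        have e1 : v u - 1 ≠ 0 := by linarith
        have e2 : v u + 1 ≠ 0 := by linarith
        field_simp
        ring
      rw [h4] at h3
      exact h3.hasDerivWithinAt
    have hGconst : 1 / (2 * rk) * lg t - t = 1 / (2 * rk) * lg t₀ - t₀ := by
      have := Convex.norm_image_sub_le_of_norm_hasDerivWithin_le
        (f' := fun _ => (0:ℝ)) (C := 0) hG (fun x _ => by simp) (convex_uIcc t₀ t)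
        Set.left_mem_uIcc Set.right_mem_uIcc
      simp only [zero_mul, norm_le_zero_iff] at this
      have := sub_eq_zero.mp this
      linarith [this]
    have hrkne : rk ≠ 0 := hrk0.ne'
    have h5 : 1 / (2 * rk) * lg t = 1 / (2 * rk) * lg t₀ + (t - t₀) := by linarith
    have h6 : lg t = lg t₀ + 2 * rk * (t - t₀) := by
      field_simp at h5
      linarith
    have hv1 : 1 < v t := (htV Set.right_mem_uIcc).2
    have hq : (v t - 1) / (v t + 1) = E t := by
      have e1 : (v t - 1) / (v t + 1) = Real.exp (lg t) := by
        simp only [hlg]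
        rw [Real.exp_sub, Real.exp_log (by linarith), Real.exp_log (by linarith)]
      rw [e1, hEeq]
      congr 1
      rw [h6, hc']
      field_simp
      ring
    have hE1 : E t < 1 := by
      rw [← hq]
      rw [div_lt_one (by linarith)]
      linarith
    have h7 : v t - 1 = E t * (v t + 1) := by
      rw [← hq, div_mul_cancel₀]
      linarith
    refine ⟨hE1, ?_⟩
    rw [eq_div_iff (by linarith : 1 - E t ≠ 0)]
    nlinarith [h7]
  -- the formula for s on segments
  have hseg2 : ∀ t, Set.uIcc t₀ t ⊆ V → s t = F t + C₂ := by
    intro t htV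
    have hD : ∀ u ∈ Set.uIcc t₀ t,
        HasDerivWithinAt (fun w => s w - F w) 0 (Set.uIcc t₀ t) u := by
      intro u hu
      have huV' : Set.uIcc t₀ u ⊆ V := (Set.uIcc_subset_uIcc_left hu).trans htV
      obtain ⟨hEu, hvu⟩ := hseg u huV'
      have h1 := hVs u (htV hu)
      have h2 := hFd u hEu
      have h3 := h1.sub h2
      rw [hvu, sub_self] at h3
      exact h3.hasDerivWithinAt
    have := Convex.norm_image_sub_le_of_norm_hasDerivWithin_le
      (f' := fun _ => (0:ℝ)) (C := 0) hD (fun x _ => by simp) (convex_uIcc t₀ t)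
      Set.left_mem_uIcc Set.right_mem_uIcc
    simp only [zero_mul, norm_le_zero_iff] at this
    have h8 := sub_eq_zero.mp this
    rw [hC₂]
    linarith [h8]
  -- neighborhoods inside V
  have hVnhds : ∀ t ∈ V, ∃ ε > 0, ∀ u, |u - t| ≤ ε → u ∈ V := by
    intro t ht
    have hc : ContinuousAt v t := (hVd t ht).differentiableAt.continuousAt
    have h1 : v ⁻¹' Set.Ioi 1 ∈ nhds t := hc.preimage_mem_nhds (Ioi_mem_nhds ht.2)
    have h2 : I ∩ v ⁻¹' Set.Ioi 1 ∈ nhds t := Filter.inter_mem (hIopen.mem_nhds ht.1) h1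
    rcases Metric.mem_nhds_iff.1 h2 with ⟨ε, hε, hball⟩
    refine ⟨ε / 2, by linarith, fun u hu => ?_⟩
    have : u ∈ Metric.ball t ε := by
      rw [Metric.mem_ball, Real.dist_eq]
      linarith [hu]
    exact ⟨(hball this).1, (hball this).2⟩
  have ht₀self : Set.uIcc t₀ t₀ ⊆ V := by
    rw [Set.uIcc_self]
    exact Set.singleton_subset_iff.2 ht₀V
  have ht₀c : t₀ < c' := (hElt t₀).1 (hseg t₀ ht₀self).1
  have hEcont : Continuous E := by
    rw [hE]; fun_prop
  have hEc' : E c' = 1 := by rw [hEeq]; simp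
  -- limits as t → c'⁻
  have T1 : Filter.Tendsto (fun t => 1 - E t) (nhdsWithin c' (Set.Iio c')) (nhdsWithin 0 (Set.Ioi 0)) := by
    apply tendsto_nhdsWithin_of_tendsto_nhds_of_eventually_within
    · have h9 : Filter.Tendsto (fun t => 1 - E t) (nhds c') (nhds (1 - E c')) :=
        (continuous_const.sub hEcont).tendsto c'
      rw [hEc', sub_self] at h9
      exact h9.mono_left nhdsWithin_le_nhds
    · filter_upwards [self_mem_nhdsWithin] with x hx
      have := (hElt x).2 hx
      simp only [Set.mem_Ioi]
      linarith
  have TF : Filter.Tendsto (fun t => F t + C₂) (nhdsWithin c' (Set.Iio c')) Filter.atTop := by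
    have T2 : Filter.Tendsto (fun t => Real.log (1 - E t)) (nhdsWithin c' (Set.Iio c')) Filter.atBot :=
      Real.tendsto_log_nhdsGT_zero.comp T1
    have T3 : Filter.Tendsto (fun t => -(1 / rk) * Real.log (1 - E t))
        (nhdsWithin c' (Set.Iio c')) Filter.atTop :=
      (tendsto_const_mul_atTop_of_neg (neg_neg_of_pos (by positivity))).2 T2
    have T4 : Filter.Tendsto (fun t : ℝ => t + C₂) (nhdsWithin c' (Set.Iio c'))
        (nhds (c' + C₂)) :=
      ((continuous_id.add continuous_const).tendsto c').mono_left nhdsWithin_le_nhds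
    have := T3.atTop_add T4
    apply this.congr
    intro x
    rw [hF]
    ring
  have Tv : Filter.Tendsto (fun t => (1 + E t) / (1 - E t)) (nhdsWithin c' (Set.Iio c')) Filter.atTop := by
    have T5 : Filter.Tendsto (fun t => (1 - E t)⁻¹) (nhdsWithin c' (Set.Iio c')) Filter.atTop :=
      tendsto_inv_nhdsGT_zero.comp T1
    have T6 := T5.const_mul_atTop (by norm_num : (0:ℝ) < 2)
    have T7 := tendsto_atTop_add_const_right _ (-1 : ℝ) T6
    apply T7.congr'
    filter_upwards [self_mem_nhdsWithin] with x hx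
    have hx1 : E x < 1 := (hElt x).2 hx
    have : (1:ℝ) - E x ≠ 0 := by linarith
    field_simp
    ring
  -- the right-hand reachability claim
  have hright : ∀ x, x ∈ I → t₀ ≤ x → Set.Icc t₀ x ⊆ V := by
    intro x hxI hx
    rcases eq_or_lt_of_le hx with rfl | hlt
    · intro u hu
      have : u = t₀ := le_antisymm hu.2 hu.1
      rw [this]; exact ht₀V
    set S := {t | t ∈ Set.Icc t₀ x ∧ Set.Icc t₀ t ⊆ V} with hSdef
    have ht₀S : t₀ ∈ S := by
      refine ⟨⟨le_refl _, hx⟩, ?_⟩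
      intro u hu
      have : u = t₀ := le_antisymm hu.2 hu.1
      rw [this]; exact ht₀V
    have hSne : S.Nonempty := ⟨t₀, ht₀S⟩
    have hSbdd : BddAbove S := ⟨x, fun t ht => ht.1.2⟩
    set b := sSup S with hbdef
    have hbmem1 : t₀ ≤ b := le_csSup hSbdd ht₀S
    have hbmem2 : b ≤ x := csSup_le hSne (fun t ht => ht.1.2)
    have hbI : b ∈ I := hIconn.out ht₀ hxI ⟨hbmem1, hbmem2⟩
    have hIco : Set.Ico t₀ b ⊆ V := by
      intro t ht
      obtain ⟨t', ht'S, htt'⟩ := exists_lt_of_lt_csSup hSne ht.2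
      exact ht'S.2 ⟨ht.1, le_of_lt htt'⟩
    have hb0 : t₀ < b := by
      obtain ⟨ε, hε, hball⟩ := hVnhds t₀ ht₀V
      have hmem : min (t₀ + ε) x ∈ S := by
        refine ⟨⟨le_min (by linarith) hx, min_le_right _ _⟩, ?_⟩
        intro u hu
        apply hball
        have h1 : u ≤ t₀ + ε := le_trans hu.2 (min_le_left _ _)
        rw [abs_le]
        exact ⟨by linarith [hu.1], by linarith⟩
      have h2 := le_csSup hSbdd hmem
      have h3 : t₀ < min (t₀ + ε) x := lt_min (by linarith) hlt
      linarith
    have hJb : ∀ t, t ∈ Set.Ico t₀ b → Set.uIcc t₀ t ⊆ V := by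
      intro t ht
      rw [Set.uIcc_of_le ht.1]
      intro u hu
      exact hIco ⟨hu.1, lt_of_le_of_lt hu.2 ht.2⟩
    have hbc : b ≤ c' := by
      by_contra h
      push_neg at h
      have hmid : max t₀ ((c' + b) / 2) ∈ Set.Ico t₀ b :=
        ⟨le_max_left _ _, max_lt hb0 (by linarith)⟩
      have h1 := (hseg _ (hJb _ hmid)).1
      have h2 := (hElt _).1 h1
      have h3 : c' < max t₀ ((c' + b) / 2) :=
        lt_of_lt_of_le (by linarith) (le_max_right _ _)
      linarith
    rcases eq_or_lt_of_le hbc with hBeq | hA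
    · -- b = c' : blow-up inside the domain, contradiction
      exfalso
      have hmemIoo : Set.Ioo t₀ b ∈ nhdsWithin b (Set.Iio b) := Ioo_mem_nhdsLT hb0
      have hTs : Filter.Tendsto s (nhdsWithin b (Set.Iio b)) Filter.atTop := by
        rw [hBeq]
        apply Filter.Tendsto.congr' _ TF
        filter_upwards [Ioo_mem_nhdsLT ht₀c] with u hu
        exact (hseg2 u (hJb u ⟨hu.1.le, by rw [hBeq]; exact hu.2⟩)).symm
      have hTvv : Filter.Tendsto v (nhdsWithin b (Set.Iio b)) Filter.atTop := by
        rw [hBeq]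
        apply Filter.Tendsto.congr' _ Tv
        filter_upwards [Ioo_mem_nhdsLT ht₀c] with u hu
        exact ((hseg u (hJb u ⟨hu.1.le, by rw [hBeq]; exact hu.2⟩)).2).symm
      by_cases h0 : v b = 0
      · have hd : deriv v b = rk * (v b ^ 2 - 1) := hode b hbI
        rw [h0] at hd
        have hne : deriv v b ≠ 0 := by
          rw [hd]
          have : rk * ((0:ℝ) ^ 2 - 1) = -rk := by ring
          rw [this]
          exact neg_ne_zero.mpr hrk0.ne'
        have hdiff : DifferentiableAt ℝ v b := differentiableAt_of_deriv_ne_zero hne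
        have hct : Filter.Tendsto v (nhdsWithin b (Set.Iio b)) (nhds (v b)) :=
          hdiff.continuousAt.continuousWithinAt
        exact not_tendsto_atTop_of_tendsto_nhds hct hTvv
      · have hsd : DifferentiableAt ℝ s b :=
          differentiableAt_of_deriv_ne_zero (by rw [← hv]; exact h0)
        have hct : Filter.Tendsto s (nhdsWithin b (Set.Iio b)) (nhds (s b)) :=
          hsd.continuousAt.continuousWithinAt
        exact not_tendsto_atTop_of_tendsto_nhds hct hTs
    · -- b < c' : the solution continues past b
      have hEb : E b < 1 := (hElt b).2 hA
      set L : ℝ := (1 + E b) / (1 - E b) with hLdef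
      clear_value L
      have hL : 1 < L := by
        rw [hLdef, lt_div_iff₀ (by linarith)]
        nlinarith [hE0 b]
      have hTv : Filter.Tendsto v (nhdsWithin b (Set.Iio b)) (nhds L) := by
        have hcont : ContinuousAt (fun t => (1 + E t) / (1 - E t)) b := by
          apply ContinuousAt.div
          · fun_prop
          · fun_prop
          · intro h; rw [sub_eq_zero] at h; rw [← h] at hEb; linarith
        have h1 : Filter.Tendsto (fun t => (1 + E t) / (1 - E t))
            (nhdsWithin b (Set.Iio b)) (nhds ((1 + E b) / (1 - E b))) :=
          hcont.continuousWithinAt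
        rw [← hLdef] at h1
        apply Filter.Tendsto.congr' _ h1
        filter_upwards [Ioo_mem_nhdsLT hb0] with u hu
        exact ((hseg u (hJb u ⟨hu.1.le, hu.2⟩)).2).symm
      have hvbL : v b = L := by
        by_cases h0 : v b = 0
        · have hd : deriv v b = rk * (v b ^ 2 - 1) := hode b hbI
          rw [h0] at hd
          have hne : deriv v b ≠ 0 := by
            rw [hd]
            have : rk * ((0:ℝ) ^ 2 - 1) = -rk := by ring
            rw [this]
            exact neg_ne_zero.mpr hrk0.ne'
          have hdiff : DifferentiableAt ℝ v b := differentiableAt_of_deriv_ne_zero hne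
          have hct : Filter.Tendsto v (nhdsWithin b (Set.Iio b)) (nhds (v b)) :=
            hdiff.continuousAt.continuousWithinAt
          exact tendsto_nhds_unique hct hTv
        · have hsdiff : DifferentiableAt ℝ s b :=
            differentiableAt_of_deriv_ne_zero (by rw [← hv]; exact h0)
          have hsd : HasDerivAt s (v b) b := by
            have := hsdiff.hasDerivAt
            rwa [← hv] at this
          have hFb : HasDerivAt F L b := by rw [hLdef]; exact hFd b hEb
          have hsb : s b = F b + C₂ := by
            have hts : Filter.Tendsto s (nhdsWithin b (Set.Iio b)) (nhds (s b)) :=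
              hsdiff.continuousAt.continuousWithinAt
            have hcF : Filter.Tendsto (fun t => F t + C₂)
                (nhdsWithin b (Set.Iio b)) (nhds (F b + C₂)) :=
              ((hFb.differentiableAt.continuousAt).add continuousAt_const).continuousWithinAt
            have htF : Filter.Tendsto s (nhdsWithin b (Set.Iio b)) (nhds (F b + C₂)) := by
              apply Filter.Tendsto.congr' _ hcF
              filter_upwards [Ioo_mem_nhdsLT hb0] with u hu
              exact (hseg2 u (hJb u ⟨hu.1.le, hu.2⟩)).symm
            exact tendsto_nhds_unique hts htF
          have hW1 : HasDerivWithinAt s (v b) (Set.Iic b) b := hsd.hasDerivWithinAt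
          have hW3 : HasDerivWithinAt (fun t => F t + C₂) L (Set.Iic b) b :=
            (hFb.add_const C₂).hasDerivWithinAt
          have hW2 : HasDerivWithinAt s L (Set.Iic b) b := by
            apply hW3.congr_of_eventuallyEq _ hsb
            have hmem : Set.Ioi t₀ ∈ nhdsWithin b (Set.Iic b) :=
              mem_nhdsWithin_of_mem_nhds (Ioi_mem_nhds hb0)
            filter_upwards [hmem, self_mem_nhdsWithin] with u hu1 hu2
            rcases eq_or_lt_of_le (Set.mem_Iic.mp hu2) with rfl | hub
            · exact hsb
            · exact hseg2 u (hJb u ⟨(hu1 : t₀ < u).le, hub⟩)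
          have e1 := hW1.derivWithin (uniqueDiffOn_Iic b b Set.self_mem_Iic)
          have e2 := hW2.derivWithin (uniqueDiffOn_Iic b b Set.self_mem_Iic)
          rw [← e1]; exact e2
      have hbV : b ∈ V := ⟨hbI, by rw [hvbL]; exact hL⟩
      obtain ⟨ε, hε, hball⟩ := hVnhds b hbV
      have hbx : b = x := by
        by_contra hne
        have hbx' : b < x := lt_of_le_of_ne hbmem2 hne
        have hmemS : min (b + ε) x ∈ S := by
          refine ⟨⟨le_trans hbmem1 (le_min (by linarith) hbx'.le), min_le_right _ _⟩, ?_⟩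
          intro u hu
          rcases lt_or_ge u b with h | h
          · exact hIco ⟨hu.1, h⟩
          · apply hball
            have h1 : u ≤ b + ε := le_trans hu.2 (min_le_left _ _)
            rw [abs_le]
            exact ⟨by linarith, by linarith⟩
        have h2 := le_csSup hSbdd hmemS
        have h3 : b < min (b + ε) x := lt_min (by linarith) hbx'
        linarith
      intro u hu
      rcases eq_or_lt_of_le (hu.2 : u ≤ x) with rfl | hux
      · rw [← hbx]; exact hbV
      · exact hIco ⟨hu.1, by rw [hbx]; exact hux⟩
  -- the left-hand reachability claim
  have hleft : ∀ x, x ∈ I → x ≤ t₀ → Set.Icc x t₀ ⊆ V := by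
    intro x hxI hx
    rcases eq_or_lt_of_le hx with heq | hlt
    · intro u hu
      have : u = t₀ := le_antisymm hu.2 (by rw [← heq]; exact hu.1)
      rw [this]; exact ht₀V
    set S := {t | t ∈ Set.Icc x t₀ ∧ Set.Icc t t₀ ⊆ V} with hSdef
    have ht₀S : t₀ ∈ S := by
      refine ⟨⟨hx, le_refl _⟩, ?_⟩
      intro u hu
      have : u = t₀ := le_antisymm hu.2 hu.1
      rw [this]; exact ht₀V
    have hSne : S.Nonempty := ⟨t₀, ht₀S⟩
    have hSbdd : BddBelow S := ⟨x, fun t ht => ht.1.1⟩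
    set a := sInf S with hadef
    have hamem1 : a ≤ t₀ := csInf_le hSbdd ht₀S
    have hamem2 : x ≤ a := le_csInf hSne (fun t ht => ht.1.1)
    have haI : a ∈ I := hIconn.out hxI ht₀ ⟨hamem2, hamem1⟩
    have hIoc : Set.Ioc a t₀ ⊆ V := by
      intro t ht
      obtain ⟨t', ht'S, htt'⟩ := exists_lt_of_csInf_lt hSne ht.1
      exact ht'S.2 ⟨le_of_lt htt', ht.2⟩
    have ha0 : a < t₀ := by
      obtain ⟨ε, hε, hball⟩ := hVnhds t₀ ht₀V
      have hmem : max (t₀ - ε) x ∈ S := by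
        refine ⟨⟨le_max_right _ _, max_le (by linarith) hx⟩, ?_⟩
        intro u hu
        apply hball
        have h1 : t₀ - ε ≤ u := le_trans (le_max_left _ _) hu.1
        rw [abs_le]
        exact ⟨by linarith, by linarith [hu.2]⟩
      have h2 := csInf_le hSbdd hmem
      have h3 : max (t₀ - ε) x < t₀ := max_lt (by linarith) hlt
      linarith
    have hJa : ∀ t, t ∈ Set.Ioc a t₀ → Set.uIcc t₀ t ⊆ V := by
      intro t ht
      rw [Set.uIcc_of_ge ht.2]
      intro u hu
      exact hIoc ⟨lt_of_lt_of_le ht.1 hu.1, hu.2⟩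
    have hac : a < c' := lt_trans ha0 ht₀c
    have hEa : E a < 1 := (hElt a).2 hac
    set L : ℝ := (1 + E a) / (1 - E a) with hLdef
    clear_value L
    have hL : 1 < L := by
      rw [hLdef, lt_div_iff₀ (by linarith)]
      nlinarith [hE0 a]
    have hTv : Filter.Tendsto v (nhdsWithin a (Set.Ioi a)) (nhds L) := by
      have hcont : ContinuousAt (fun t => (1 + E t) / (1 - E t)) a := by
        apply ContinuousAt.div
        · fun_prop
        · fun_prop
        · intro h; rw [sub_eq_zero] at h; rw [← h] at hEa; linarith
      have h1 : Filter.Tendsto (fun t => (1 + E t) / (1 - E t))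
          (nhdsWithin a (Set.Ioi a)) (nhds ((1 + E a) / (1 - E a))) :=
        hcont.continuousWithinAt
      rw [← hLdef] at h1
      apply Filter.Tendsto.congr' _ h1
      filter_upwards [Ioo_mem_nhdsGT ha0] with u hu
      exact ((hseg u (hJa u ⟨hu.1, hu.2.le⟩)).2).symm
    have hvaL : v a = L := by
      by_cases h0 : v a = 0
      · have hd : deriv v a = rk * (v a ^ 2 - 1) := hode a haI
        rw [h0] at hd
        have hne : deriv v a ≠ 0 := by
          rw [hd]
          have : rk * ((0:ℝ) ^ 2 - 1) = -rk := by ring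
          rw [this]
          exact neg_ne_zero.mpr hrk0.ne'
        have hdiff : DifferentiableAt ℝ v a := differentiableAt_of_deriv_ne_zero hne
        have hct : Filter.Tendsto v (nhdsWithin a (Set.Ioi a)) (nhds (v a)) :=
          hdiff.continuousAt.continuousWithinAt
        exact tendsto_nhds_unique hct hTv
      · have hsdiff : DifferentiableAt ℝ s a :=
          differentiableAt_of_deriv_ne_zero (by rw [← hv]; exact h0)
        have hsd : HasDerivAt s (v a) a := by
          have := hsdiff.hasDerivAt
          rwa [← hv] at this
        have hFb : HasDerivAt F L a := by rw [hLdef]; exact hFd a hEa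
        have hsa : s a = F a + C₂ := by
          have hts : Filter.Tendsto s (nhdsWithin a (Set.Ioi a)) (nhds (s a)) :=
            hsdiff.continuousAt.continuousWithinAt
          have hcF : Filter.Tendsto (fun t => F t + C₂)
              (nhdsWithin a (Set.Ioi a)) (nhds (F a + C₂)) :=
            ((hFb.differentiableAt.continuousAt).add continuousAt_const).continuousWithinAt
          have htF : Filter.Tendsto s (nhdsWithin a (Set.Ioi a)) (nhds (F a + C₂)) := by
            apply Filter.Tendsto.congr' _ hcF
            filter_upwards [Ioo_mem_nhdsGT ha0] with u hu
            exact (hseg2 u (hJa u ⟨hu.1, hu.2.le⟩)).symm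
          exact tendsto_nhds_unique hts htF
        have hW1 : HasDerivWithinAt s (v a) (Set.Ici a) a := hsd.hasDerivWithinAt
        have hW3 : HasDerivWithinAt (fun t => F t + C₂) L (Set.Ici a) a :=
          (hFb.add_const C₂).hasDerivWithinAt
        have hW2 : HasDerivWithinAt s L (Set.Ici a) a := by
          apply hW3.congr_of_eventuallyEq _ hsa
          have hmem : Set.Iio t₀ ∈ nhdsWithin a (Set.Ici a) :=
            mem_nhdsWithin_of_mem_nhds (Iio_mem_nhds ha0)
          filter_upwards [hmem, self_mem_nhdsWithin] with u hu1 hu2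
          rcases eq_or_lt_of_le (Set.mem_Ici.mp hu2) with h | hua
          · rw [← h]; exact hsa
          · exact hseg2 u (hJa u ⟨hua, (hu1 : u < t₀).le⟩)
        have e1 := hW1.derivWithin (uniqueDiffOn_Ici a a Set.self_mem_Ici)
        have e2 := hW2.derivWithin (uniqueDiffOn_Ici a a Set.self_mem_Ici)
        rw [← e1]; exact e2
    have haV : a ∈ V := ⟨haI, by rw [hvaL]; exact hL⟩
    obtain ⟨ε, hε, hball⟩ := hVnhds a haV
    have hax : a = x := by
      by_contra hne
      have hax' : x < a := lt_of_le_of_ne hamem2 (Ne.symm hne)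
      have hmemS : max (a - ε) x ∈ S := by
        refine ⟨⟨le_max_right _ _, le_trans (max_le (by linarith) hax'.le) hamem1⟩, ?_⟩
        intro u hu
        rcases lt_or_ge a u with h | h
        · exact hIoc ⟨h, hu.2⟩
        · apply hball
          have h1 : a - ε ≤ u := le_trans (le_max_left _ _) hu.1
          rw [abs_le]
          exact ⟨by linarith, by linarith⟩
      have h2 := csInf_le hSbdd hmemS
      have h3 : max (a - ε) x < a := max_lt (by linarith) hax'
      linarith
    intro u hu
    rcases eq_or_lt_of_le (hu.1 : x ≤ u) with h | hux
    · rw [← h, ← hax]; exact haV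
    · exact hIoc ⟨by rw [← hax] at hux; exact hux, hu.2⟩
  -- every point of I lies in V
  have hIV : ∀ t ∈ I, Set.uIcc t₀ t ⊆ V := by
    intro t htI
    rcases le_total t₀ t with h | h
    · rw [Set.uIcc_of_le h]
      exact fun u hu => hright t htI h ⟨hu.1, hu.2⟩
    · rw [Set.uIcc_of_ge h]
      exact fun u hu => hleft t htI h ⟨hu.1, hu.2⟩
  -- conclusion
  have hIsub : I ⊆ Set.Iio c' := fun t htI => (hElt t).1 (hseg t (hIV t htI)).1
  have hcp : 1 / (2 * rk) * Real.log (1 / C₁) = c' := by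
    rw [hC₁, one_div (Real.exp _), ← Real.exp_neg, Real.log_exp, neg_neg]
    field_simp
  refine ⟨C₁, C₂, hC₁0, ?_, ?_, ?_⟩
  · intro t htI
    have hU := hIV t htI
    have hEt : E t < 1 := (hseg t hU).1
    have h2 := hseg2 t hU
    have hEt' : E t = C₁ * Real.exp (2 * rk * t) := by rw [hE]
    have habs : |C₁ * Real.exp (2 * rk * t) - 1| = 1 - E t := by
      rw [← hEt', abs_of_nonpos (by linarith)]
      ring
    rw [h2, hF, habs]
  · rw [hcp]
    exact hIsub
  · rw [hcp]
    have hsub : nhdsWithin c' I ≤ nhdsWithin c' (Set.Iio c') := nhdsWithin_mono _ hIsub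
    apply Filter.Tendsto.congr' _ (TF.mono_left hsub)
    filter_upwards [self_mem_nhdsWithin] with u hu
    exact (hseg2 u (hIV u hu)).symm
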